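/- Let n be a positive integer, α, β ∈ ℂ, and let u, v : ℂ → Mat_n(ℂ) be differentiable functions satisfying u'(z) = −u² + 2uv + α(uv − vu) and v'(z) = −v² + 2vu + β(vu − uv) for all z ∈ ℂ. Then the functions U = −u, V = v − u satisfy U' = −U² + 2UV + α(UV − VU) and V' = −V² + 2VU + β'(VU − UV) with β' = −α − β − 3; that is, the involution (u, v) ↦ (−u, v − u) maps solutions with parameters (α, β) to solutions with parameters (α, −α−β−3). -/

import Mathlib

attribute [local instance] Matrix.linftyOpNormedAddCommGroup Matrix.linftyOpNormedSpace

/-- The involution `(u, v) ↦ (−u, v − u)` maps solutions of the homogeneous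
system with parameters `(α, β)` to solutions with parameters `(α, −α−β−3)`. -/
theorem involution_shear (n : ℕ) (hn : 0 < n) (α β : ℂ)
    (u v : ℂ → Matrix (Fin n) (Fin n) ℂ)
    (hu : ∀ z : ℂ, HasDerivAt u
      (-(u z) ^ 2 + 2 * (u z * v z) + α • (u z * v z - v z * u z)) z)
    (hv : ∀ z : ℂ, HasDerivAt v
      (-(v z) ^ 2 + 2 * (v z * u z) + β • (v z * u z - u z * v z)) z) :
    (∀ z : ℂ, HasDerivAt (fun z => -u z)
      (-(-u z) ^ 2 + 2 * (-u z * (v z - u z))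
        + α • (-u z * (v z - u z) - (v z - u z) * -u z)) z) ∧
    (∀ z : ℂ, HasDerivAt (fun z => v z - u z)
      (-(v z - u z) ^ 2 + 2 * ((v z - u z) * -u z)
        + (-α - β - 3) • ((v z - u z) * -u z - -u z * (v z - u z))) z) := by
  constructor
  · intro z
    refine (hu z).neg.congr_deriv ?_
    simp only [pow_two, neg_mul, mul_neg, sub_mul, mul_sub, neg_sub, neg_neg, two_mul, smul_sub]
    module
  · intro z
    refine ((hv z).sub (hu z)).congr_deriv ?_
    simp only [pow_two, neg_mul, mul_neg, sub_mul, mul_sub, neg_sub, neg_neg, two_mul, smul_sub]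
    module
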